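/- Let F be a homogeneous cubic polynomial on V = ℂ⁶, let U ⊆ V be a 4-dimensional subspace, let l be a linear form on U and q a quadratic form on U such that F|_U = l · q. Then for every x ∈ U with l(x) = 0 and q(x) = 0, the differential of F at x vanishes on all of U, i.e., U ⊆ ker(dF_x). In particular, if a cubic fourfold X = {F = 0} meets a projective 3-space Π = ℙ(U) in the union of a plane P = ℙ(ker l) and a quadric Q = ℙ({q = 0}), then for every point x of a line L ⊆ P ∩ Q one has Π ⊆ T_x X. -/
import Mathlib


open MvPolynomial

/-- The differential `dF_x : V → ℂ` of a polynomial `F` at a point `x`,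
given by `y ↦ ∑ i, y i * ∂F/∂xᵢ(x)`. -/
noncomputable def diffAt (F : MvPolynomial (Fin 6) ℂ) (x : Fin 6 → ℂ) :
    (Fin 6 → ℂ) →ₗ[ℂ] ℂ :=
  ∑ i, (eval x (pderiv i F)) • LinearMap.proj i


noncomputable def lineSub (x y : Fin 6 → ℂ) : MvPolynomial (Fin 6) ℂ →+* Polynomial ℂ :=
  eval₂Hom Polynomial.C (fun i => Polynomial.C (x i) + Polynomial.C (y i) * Polynomial.X)

lemma lineSub_eval (x y : Fin 6 → ℂ) (F : MvPolynomial (Fin 6) ℂ) (t : ℂ) :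
    Polynomial.eval t (lineSub x y F) = eval (fun i => x i + y i * t) F := by
  have h := eval₂_comp_left (Polynomial.evalRingHom t) Polynomial.C
      (fun i => Polynomial.C (x i) + Polynomial.C (y i) * Polynomial.X) F
  simp only [lineSub, coe_eval₂Hom] at *
  show (Polynomial.evalRingHom t) _ = _
  have hg : (⇑(Polynomial.evalRingHom t) ∘ fun i => Polynomial.C (x i) + Polynomial.C (y i) * Polynomial.X) = fun i => x i + y i * t := by
    funext i; simp
  rw [h, hg, show (Polynomial.evalRingHom t).comp Polynomial.C = RingHom.id ℂ from RingHom.ext fun a => by simp]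
  rfl

lemma lineSub_coeff_zero (x y : Fin 6 → ℂ) (p : MvPolynomial (Fin 6) ℂ) :
    (lineSub x y p).coeff 0 = eval x p := by
  rw [Polynomial.coeff_zero_eq_eval_zero, lineSub_eval]
  simp

lemma lineSub_coeff_one (x y : Fin 6 → ℂ) (p : MvPolynomial (Fin 6) ℂ) :
    (lineSub x y p).coeff 1 = ∑ i, y i * eval x (pderiv i p) := by
  induction p using MvPolynomial.induction_on with
  | C a => simp [lineSub]
  | add p q hp hq => simp [map_add, Polynomial.coeff_add, hp, hq, Finset.sum_add_distrib,
      mul_add]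
  | mul_X p n hp =>
      have : (lineSub x y) (p * X n)
          = (lineSub x y) p * (Polynomial.C (x n) + Polynomial.C (y n) * Polynomial.X) := by
        simp [lineSub]
      rw [this, mul_add, Polynomial.coeff_add, mul_comm (Polynomial.C (y n)) Polynomial.X,
        ← mul_assoc, Polynomial.coeff_mul_C, Polynomial.coeff_mul_C, Polynomial.coeff_mul_X,
        hp, lineSub_coeff_zero]
      have e : ∀ i : Fin 6, eval x (pderiv i (X n) : MvPolynomial (Fin 6) ℂ) = if n = i then 1 else 0 := by
        intro i
        rw [pderiv_X]
        rcases eq_or_ne n i with h | h <;> simp [Pi.single_apply, h, Ne.symm]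
      simp only [pderiv_mul, map_add, map_mul, eval_X, e, mul_ite, mul_one, mul_zero, mul_add,
        Finset.sum_add_distrib, Finset.sum_ite_eq, Finset.mem_univ, if_true]
      rw [Finset.sum_mul]
      congr 1
      · exact Finset.sum_congr rfl fun i _ => by ring
      · ring

/-- If a cubic `F` restricted to a 4-dimensional subspace `U` factors as `l · q`, then at
every point of `U` where both `l` and `q` vanish, the differential of `F` vanishes on all
of `U`: the tangent hyperplane at any point of a line `L ⊆ P ∩ Q` contains `Π = ℙ(U)`. -/
theorem tangent_contains_span
    (F : MvPolynomial (Fin 6) ℂ) (hF3 : F.IsHomogeneous 3)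
    (U : Submodule ℂ (Fin 6 → ℂ)) (hU : Module.finrank ℂ U = 4)
    (l : (Fin 6 → ℂ) →ₗ[ℂ] ℂ) (q : QuadraticForm ℂ (Fin 6 → ℂ))
    (hfact : ∀ y ∈ U, eval y F = l y * q y) :
    ∀ x ∈ U, l x = 0 → q x = 0 → ∀ y ∈ U, diffAt F x y = 0 := by
  intro x hx hl hq y hy
  have key : lineSub x y F = Polynomial.C (l y) * Polynomial.X *
      (Polynomial.C (QuadraticMap.polar q x y) * Polynomial.X +
        Polynomial.C (q y) * Polynomial.X ^ 2) := by
    apply Polynomial.funext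
    intro t
    rw [lineSub_eval]
    have hmem : x + t • y ∈ U := U.add_mem hx (U.smul_mem t hy)
    have hfun : (fun i => x i + y i * t) = x + t • y := by
      funext i
      simp [Pi.add_apply, mul_comm]
    rw [hfun, hfact _ hmem]
    have hlv : l (x + t • y) = t * l y := by simp [hl]
    have hqv : q (x + t • y) = t * QuadraticMap.polar q x y + t ^ 2 * q y := by
      rw [show q (x + t • y) = q x + q (t • y) + QuadraticMap.polar q x (t • y) from by
        simp [QuadraticMap.polar]]
      rw [QuadraticMap.polar_smul_right, QuadraticMap.map_smul, hq]
      simp [smul_eq_mul]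
      ring
    rw [hlv, hqv]
    simp
    ring
  have h1 : (lineSub x y F).coeff 1 = 0 := by
    rw [key, mul_comm (Polynomial.C (l y)) Polynomial.X, mul_assoc,
      show (1 : ℕ) = 0 + 1 from rfl, Polynomial.coeff_X_mul]
    simp
  rw [lineSub_coeff_one] at h1
  simpa [diffAt, LinearMap.sum_apply, LinearMap.smul_apply, LinearMap.proj_apply,
    smul_eq_mul, mul_comm] using h1
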